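/- For λ > 0, ν ∈ (0,1], t > 0 and integer k ≥ 1, the fractional Poisson state probabilities p_k^ν(t) = (λ t^ν)^k E_{ν,νk+1}^{k+1}(−λ t^ν) satisfy p_k^ν(t) = λ ∫_0^t (t−w)^{ν−1} E_{ν,ν}(−λ(t−w)^ν) p_{k−1}^ν(w) dw. -/

import Mathlib

open Real MeasureTheory intervalIntegral

noncomputable def ML1 (ν z : ℝ) : ℝ := ∑' n : ℕ, z ^ n / Real.Gamma (ν * n + 1)

noncomputable def ML2 (β γ z : ℝ) : ℝ := ∑' r : ℕ, z ^ r / Real.Gamma (β * r + γ)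

noncomputable def poch (ξ : ℝ) (r : ℕ) : ℝ := ∏ i ∈ Finset.range r, (ξ + i)

noncomputable def ML3 (β γ ξ z : ℝ) : ℝ :=
  ∑' r : ℕ, poch ξ r * z ^ r / (r.factorial * Real.Gamma (β * r + γ))

noncomputable def pfrac (lam ν : ℝ) (k : ℕ) (t : ℝ) : ℝ :=
  (lam * t ^ ν) ^ k * ML3 ν (ν * k + 1) (k + 1) (-(lam * t ^ ν))

/-! ### Auxiliary lemmas about `poch` -/

lemma poch_nonneg {ξ : ℝ} (hξ : 0 ≤ ξ) (r : ℕ) : 0 ≤ poch ξ r :=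
  Finset.prod_nonneg fun i _ => by positivity

lemma poch_succ_top (ξ : ℝ) (r : ℕ) : poch ξ (r + 1) = poch ξ r * (ξ + r) := by
  unfold poch; exact Finset.prod_range_succ _ r

lemma poch_succ (ξ : ℝ) (r : ℕ) : poch ξ (r + 1) = ξ * poch (ξ + 1) r := by
  unfold poch
  rw [Finset.prod_range_succ']
  simp only [Nat.cast_zero, add_zero, Nat.cast_add, Nat.cast_one]
  rw [mul_comm]
  congr 1
  exact Finset.prod_congr rfl fun i _ => by ring

lemma poch_one (r : ℕ) : poch 1 r = r.factorial := by
  induction r with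
  | zero => simp [poch]
  | succ n ih =>
      rw [poch_succ_top, ih, Nat.factorial_succ]
      push_cast
      ring

lemma poch_sum (ξ : ℝ) (m : ℕ) :
    ∑ s ∈ Finset.range (m + 1), poch ξ s / s.factorial = poch (ξ + 1) m / m.factorial := by
  induction m with
  | zero => simp [poch]
  | succ n ih =>
      rw [Finset.sum_range_succ, ih, poch_succ ξ n, poch_succ_top (ξ + 1) n,
        Nat.factorial_succ]
      have h1 : (n.factorial : ℝ) ≠ 0 := by exact_mod_cast n.factorial_ne_zero
      push_cast
      field_simp
      ring

/-! ### Gamma function lower bound via log-convexity -/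

lemma Gamma_lb {ν x : ℝ} (hν : 0 < ν) (hν1 : ν ≤ 1) (hx : 0 < x) :
    x * Real.Gamma x * (x + ν) ^ (ν - 1) ≤ Real.Gamma (x + ν) := by
  rcases eq_or_lt_of_le hν1 with h1 | h1
  · rw [← h1]
    simp only [sub_self, Real.rpow_zero, mul_one]
    rw [← Real.Gamma_add_one hx.ne']
    rw [← h1]
  · have hb : 0 < 1 - ν := by linarith
    have hsν : (0:ℝ) < x + ν := by positivity
    have key := Real.Gamma_mul_add_mul_le_rpow_Gamma_mul_rpow_Gamma
      (s := x + ν) (t := x + ν + 1) hsν (by positivity) hν hb (by ring)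
    have harg : ν * (x + ν) + (1 - ν) * (x + ν + 1) = x + 1 := by ring
    rw [harg] at key
    have hG : 0 < Real.Gamma (x + ν) := Real.Gamma_pos_of_pos hsν
    rw [Real.Gamma_add_one hsν.ne', Real.Gamma_add_one hx.ne'] at key
    have hrw : Real.Gamma (x + ν) ^ ν * ((x + ν) * Real.Gamma (x + ν)) ^ (1 - ν) =
        Real.Gamma (x + ν) * (x + ν) ^ (1 - ν) := by
      rw [Real.mul_rpow hsν.le hG.le, mul_comm ((x + ν) ^ (1 - ν)) _, ← mul_assoc,
        ← Real.rpow_add hG]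
      norm_num
    rw [hrw] at key
    have hstep : x * Real.Gamma x * (x + ν) ^ (ν - 1) ≤
        Real.Gamma (x + ν) * (x + ν) ^ (1 - ν) * (x + ν) ^ (ν - 1) :=
      mul_le_mul_of_nonneg_right key (Real.rpow_nonneg hsν.le _)
    calc x * Real.Gamma x * (x + ν) ^ (ν - 1)
        ≤ Real.Gamma (x + ν) * (x + ν) ^ (1 - ν) * (x + ν) ^ (ν - 1) := hstep
      _ = Real.Gamma (x + ν) := by
          rw [mul_assoc, ← Real.rpow_add hsν]
          norm_num

/-! ### Summability of Mittag-Leffler type series -/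

lemma summable_ml {ν γ ξ : ℝ} (hν : 0 < ν) (hν1 : ν ≤ 1) (hγ : 0 < γ) (hξ : 0 ≤ ξ) (z : ℝ) :
    Summable fun m : ℕ => poch ξ m * z ^ m / (m.factorial * Real.Gamma (ν * m + γ)) := by
  have hnorm : ∀ m : ℕ, ‖poch ξ m * z ^ m / (m.factorial * Real.Gamma (ν * m + γ))‖ =
      poch ξ m * |z| ^ m / (m.factorial * Real.Gamma (ν * m + γ)) := by
    intro m
    have hΓ : 0 < Real.Gamma (ν * m + γ) := Real.Gamma_pos_of_pos (by positivity)
    have hfa : (0:ℝ) < m.factorial := by exact_mod_cast m.factorial_pos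
    rw [Real.norm_eq_abs, abs_div, abs_mul, abs_pow,
      abs_of_nonneg (poch_nonneg hξ m), abs_of_pos (mul_pos hfa hΓ)]
  apply summable_of_ratio_norm_eventually_le (r := 1/2) (by norm_num)
  have hx : Filter.Tendsto (fun n : ℕ => ν * n + γ) Filter.atTop Filter.atTop := by
    apply Filter.tendsto_atTop_add_const_right
    exact Filter.Tendsto.const_mul_atTop hν tendsto_natCast_atTop_atTop
  have hB : Filter.Tendsto (fun n : ℕ => 2 * (ξ + 1) * |z| * (ν * n + γ) ^ (-ν))
      Filter.atTop (nhds 0) := by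
    have := ((tendsto_rpow_neg_atTop hν).comp hx).const_mul (2 * (ξ + 1) * |z|)
    simpa using this
  filter_upwards [hB.eventually_le_const (by norm_num : (0:ℝ) < 1/2),
    hx.eventually_ge_atTop (max 1 ν)] with n hn1 hn2
  rw [hnorm, hnorm]
  set x := ν * (n:ℝ) + γ with hxdef
  have hx1 : 1 ≤ x := le_trans (le_max_left _ _) hn2
  have hxν : ν ≤ x := le_trans (le_max_right _ _) hn2
  have hx0 : (0:ℝ) < x := lt_of_lt_of_le one_pos hx1
  have hΓx : 0 < Real.Gamma x := Real.Gamma_pos_of_pos hx0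
  have hΓν : 0 < Real.Gamma (x + ν) := Real.Gamma_pos_of_pos (by positivity)
  have hGlb : x * Real.Gamma x * (x + ν) ^ (ν - 1) ≤ Real.Gamma (x + ν) :=
    Gamma_lb hν hν1 hx0
  have h1 : poch ξ (n + 1) = poch ξ n * (ξ + n) := poch_succ_top ξ n
  have h2 : (((n + 1).factorial : ℕ) : ℝ) = ((n:ℝ) + 1) * n.factorial := by
    rw [Nat.factorial_succ]; push_cast; ring
  have h3 : Real.Gamma (ν * ((n:ℕ)+1 : ℕ) + γ) = Real.Gamma (x + ν) := by
    congr 1; push_cast; rw [hxdef]; ring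
  rw [h1, h2, h3, pow_succ]
  have hfn : (0:ℝ) < n.factorial := by exact_mod_cast n.factorial_pos
  have hpown : (0:ℝ) ≤ |z| ^ n := by positivity
  have hνx : (0:ℝ) < x + ν := by positivity
  have hpow : (x + ν) ^ (ν - 1) = ((x + ν) ^ (1 - ν))⁻¹ := by
    rw [← Real.rpow_neg hνx.le, neg_sub]
  have h2x : (x + ν) ^ (1 - ν) ≤ 2 * x ^ (1 - ν) := by
    calc (x + ν) ^ (1 - ν) ≤ (2 * x) ^ (1 - ν) :=
          Real.rpow_le_rpow (by positivity) (by linarith) (by linarith)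
      _ = 2 ^ (1 - ν) * x ^ (1 - ν) := Real.mul_rpow (by norm_num) hx0.le
      _ ≤ 2 ^ (1:ℝ) * x ^ (1 - ν) := by
          apply mul_le_mul_of_nonneg_right
            (Real.rpow_le_rpow_of_exponent_le (by norm_num) (by linarith))
            (Real.rpow_nonneg hx0.le _)
      _ = 2 * x ^ (1 - ν) := by norm_num
  have hxx : x ^ (1 - ν) = x ^ (-ν) * x := by
    rw [show (1 - ν) = -ν + 1 by ring, Real.rpow_add_one hx0.ne']
  have hdenpos : (0:ℝ) < ((n:ℝ) + 1) * (n.factorial : ℝ) *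
      (x * Real.Gamma x * (x + ν) ^ (ν - 1)) := by
    have : (0:ℝ) < (x + ν) ^ (ν - 1) := Real.rpow_pos_of_pos hνx _
    positivity
  have step1 : poch ξ n * (ξ + n) * (|z| ^ n * |z|) /
        (((n:ℝ) + 1) * (n.factorial : ℝ) * Real.Gamma (x + ν)) ≤
      poch ξ n * (ξ + n) * (|z| ^ n * |z|) /
        (((n:ℝ) + 1) * (n.factorial : ℝ) * (x * Real.Gamma x * (x + ν) ^ (ν - 1))) := by
    have hnum : (0:ℝ) ≤ poch ξ n * (ξ + n) * (|z| ^ n * |z|) := by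
      have := poch_nonneg hξ n
      positivity
    apply div_le_div_of_nonneg_left hnum hdenpos
    apply mul_le_mul_of_nonneg_left hGlb (by positivity)
  have hrw2 : poch ξ n * (ξ + n) * (|z| ^ n * |z|) /
        (((n:ℝ) + 1) * (n.factorial : ℝ) * (x * Real.Gamma x * (x + ν) ^ (ν - 1))) =
      (poch ξ n * |z| ^ n / ((n.factorial : ℝ) * Real.Gamma x)) *
        ((ξ + n) * |z| * (x + ν) ^ (1 - ν) / (((n:ℝ) + 1) * x)) := by
    rw [hpow]
    have hp1 : (0:ℝ) < (x + ν) ^ (1 - ν) := Real.rpow_pos_of_pos hνx _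
    field_simp
  have hfac : (ξ + n) * |z| * (x + ν) ^ (1 - ν) / (((n:ℝ) + 1) * x) ≤
      2 * (ξ + 1) * |z| * x ^ (-ν) := by
    rw [div_le_iff₀ (by positivity)]
    calc (ξ + n) * |z| * (x + ν) ^ (1 - ν)
        ≤ ((ξ + 1) * ((n:ℝ) + 1)) * |z| * (2 * x ^ (1 - ν)) := by
          apply mul_le_mul
          · apply mul_le_mul_of_nonneg_right _ (abs_nonneg z)
            nlinarith [Nat.cast_nonneg (α := ℝ) n]
          · exact h2x
          · exact Real.rpow_nonneg hνx.le _
          · positivity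
      _ = 2 * (ξ + 1) * |z| * x ^ (-ν) * (((n:ℝ) + 1) * x) := by rw [hxx]; ring
  have hA : (0:ℝ) ≤ poch ξ n * |z| ^ n / ((n.factorial : ℝ) * Real.Gamma x) := by
    have := poch_nonneg hξ n
    positivity
  calc poch ξ n * (ξ + n) * (|z| ^ n * |z|) /
        (((n:ℝ) + 1) * (n.factorial : ℝ) * Real.Gamma (x + ν)) ≤ _ := step1
    _ = (poch ξ n * |z| ^ n / ((n.factorial : ℝ) * Real.Gamma x)) *
        ((ξ + n) * |z| * (x + ν) ^ (1 - ν) / (((n:ℝ) + 1) * x)) := hrw2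
    _ ≤ (poch ξ n * |z| ^ n / ((n.factorial : ℝ) * Real.Gamma x)) *
        (2 * (ξ + 1) * |z| * x ^ (-ν)) :=
          mul_le_mul_of_nonneg_left hfac hA
    _ ≤ (poch ξ n * |z| ^ n / ((n.factorial : ℝ) * Real.Gamma x)) * (1/2) :=
          mul_le_mul_of_nonneg_left hn1 hA
    _ = 1/2 * (poch ξ n * |z| ^ n / ((n.factorial : ℝ) * Real.Gamma x)) := mul_comm _ _

lemma summable_ml2 {ν γ : ℝ} (hν : 0 < ν) (hν1 : ν ≤ 1) (hγ : 0 < γ) (z : ℝ) :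
    Summable fun r : ℕ => z ^ r / Real.Gamma (ν * r + γ) := by
  apply (summable_ml hν hν1 hγ zero_le_one z).congr
  intro r
  rw [poch_one]
  have h : ((r.factorial : ℕ) : ℝ) ≠ 0 := by exact_mod_cast r.factorial_ne_zero
  rw [mul_div_mul_left _ _ h]

/-! ### Real Beta integral -/

lemma beta_value {a b t : ℝ} (ha : 0 < a) (hb : 0 < b) (ht : 0 < t) :
    ∫ w in (0:ℝ)..t, w ^ (b - 1) * (t - w) ^ (a - 1) =
      Real.Gamma a * Real.Gamma b / Real.Gamma (a + b) * t ^ (a + b - 1) := by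
  have h1 := Complex.betaIntegral_scaled (b : ℂ) (a : ℂ) ht
  have h2 := Complex.Gamma_mul_Gamma_eq_betaIntegral
    (s := (b:ℂ)) (t := (a:ℂ)) (by simpa using hb) (by simpa using ha)
  have h3 : (∫ x in (0:ℝ)..t, (x:ℂ) ^ ((b:ℂ) - 1) * ((t:ℂ) - x) ^ ((a:ℂ) - 1)) =
      ((∫ w in (0:ℝ)..t, w ^ (b - 1) * (t - w) ^ (a - 1) : ℝ) : ℂ) := by
    rw [← intervalIntegral.integral_ofReal]
    refine intervalIntegral.integral_congr fun x hx => ?_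
    rw [Set.uIcc_of_le ht.le] at hx
    have hx0 : 0 ≤ x := hx.1
    have hxt : 0 ≤ t - x := by linarith [hx.2]
    rw [Complex.ofReal_mul, Complex.ofReal_cpow hx0, Complex.ofReal_cpow hxt]
    push_cast
    ring
  rw [h3] at h1
  have hΓab : (Real.Gamma (a + b) : ℂ) ≠ 0 := by
    exact_mod_cast (Real.Gamma_pos_of_pos (by positivity)).ne'
  have hba : (b:ℂ) + (a:ℂ) = ((a + b : ℝ) : ℂ) := by push_cast; ring
  have h4 : ((∫ w in (0:ℝ)..t, w ^ (b - 1) * (t - w) ^ (a - 1) : ℝ) : ℂ) =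
      ((t ^ (a + b - 1) : ℝ) : ℂ) * Complex.betaIntegral (b:ℂ) (a:ℂ) := by
    rw [h1]
    congr 1
    rw [Complex.ofReal_cpow ht.le]
    push_cast
    ring_nf
  have h5 : Complex.betaIntegral (b:ℂ) (a:ℂ) =
      ((Real.Gamma a * Real.Gamma b / Real.Gamma (a + b) : ℝ) : ℂ) := by
    have hG : Complex.Gamma ((b:ℂ) + (a:ℂ)) = ((Real.Gamma (a+b) : ℝ) : ℂ) := by
      rw [hba, Complex.Gamma_ofReal]
    rw [hG, Complex.Gamma_ofReal, Complex.Gamma_ofReal] at h2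
    have hbeta : Complex.betaIntegral (b:ℂ) (a:ℂ) =
        ((Real.Gamma b : ℝ):ℂ) * ((Real.Gamma a : ℝ):ℂ) / ((Real.Gamma (a+b) : ℝ):ℂ) := by
      rw [eq_div_iff hΓab]
      linear_combination -h2
    rw [hbeta]
    push_cast
    ring
  rw [h5] at h4
  have := h4
  rw [← Complex.ofReal_mul, Complex.ofReal_inj] at this
  rw [this]
  ring

lemma beta_integrable {e1 e2 t : ℝ} (h1 : -1 < e1) (h2 : 0 ≤ e2) (ht : 0 < t) :
    IntegrableOn (fun w => (t - w) ^ e1 * w ^ e2) (Set.Ioo 0 t) := by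
  have hInt : IntervalIntegrable (fun w => (t - w) ^ e1) volume 0 t := by
    have h := (intervalIntegral.intervalIntegrable_rpow' (a := 0) (b := t) h1).comp_sub_left t
    simpa using h.symm
  have hIoo : IntegrableOn (fun w => (t - w) ^ e1) (Set.Ioo 0 t) := by
    rw [intervalIntegrable_iff_integrableOn_Ioo_of_le ht.le] at hInt
    exact hInt
  have hmeas : AEStronglyMeasurable (fun w : ℝ => w ^ e2)
      (volume.restrict (Set.Ioo 0 t)) :=
    (Real.continuous_rpow_const h2).aestronglyMeasurable
  have hbd : ∀ᵐ w ∂(volume.restrict (Set.Ioo 0 t)), ‖(fun w : ℝ => w ^ e2) w‖ ≤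
      max 1 (t ^ e2) := by
    filter_upwards [ae_restrict_mem measurableSet_Ioo] with w hw
    rw [Real.norm_eq_abs, abs_of_nonneg (Real.rpow_nonneg hw.1.le _)]
    exact le_trans (Real.rpow_le_rpow hw.1.le hw.2.le h2) (le_max_right _ _)
  have := Integrable.bdd_mul (c := max 1 (t ^ e2)) hIoo hmeas hbd
  exact this.congr (Filter.Eventually.of_forall fun w => by ring)

/-! ### helpers for rpow manipulations -/

lemma rpow_nat_mul {u : ℝ} (hu : 0 ≤ u) (c : ℝ) (r : ℕ) : (u ^ c) ^ r = u ^ (c * r) := by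
  rw [Real.rpow_mul hu, Real.rpow_natCast]

/-! ### Auxiliary definitions for the main theorem -/

noncomputable def auxA (lam ν : ℝ) (K : ℕ) (p : ℕ × ℕ) : ℝ :=
  (-lam) ^ p.1 * (-lam) ^ p.2 * lam ^ K * poch ((K:ℝ) + 1) p.2 /
    ((p.2.factorial : ℝ) * (Real.Gamma (ν * p.1 + ν) * Real.Gamma (ν * p.2 + (ν * K + 1))))

noncomputable def auxF (lam ν t : ℝ) (K : ℕ) (p : ℕ × ℕ) (w : ℝ) : ℝ :=
  auxA lam ν K p * ((t - w) ^ (ν * p.1 + ν - 1) * w ^ (ν * p.2 + ν * K))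

noncomputable def auxU (lam ν t : ℝ) (K : ℕ) (m : ℕ) : ℝ :=
  lam ^ K * t ^ (ν * K + ν) * (-(lam * t ^ ν)) ^ m / Real.Gamma (ν * m + (ν * K + ν + 1))

noncomputable def auxU' (lam ν t : ℝ) (K : ℕ) (m : ℕ) : ℝ :=
  lam ^ K * t ^ (ν * K + ν) * (lam * t ^ ν) ^ m / Real.Gamma (ν * m + (ν * K + ν + 1))

noncomputable def auxV (K : ℕ) (s : ℕ) : ℝ := poch ((K:ℝ) + 1) s / (s.factorial : ℝ)

noncomputable def auxT (lam ν t : ℝ) (K : ℕ) (p : ℕ × ℕ) : ℝ :=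
  auxU lam ν t K (p.1 + p.2) * auxV K p.2

lemma antidiagonal_sum_eq (u v : ℕ → ℝ) (m : ℕ) :
    ∑ kl ∈ Finset.HasAntidiagonal.antidiagonal m, u (kl.1 + kl.2) * v kl.2 =
      u m * ∑ s ∈ Finset.range (m + 1), v s := by
  rw [Finset.Nat.sum_antidiagonal_eq_sum_range_succ_mk, Finset.mul_sum,
    ← Finset.sum_range_reflect (fun s => u m * v s) (m + 1)]
  apply Finset.sum_congr rfl
  intro k hk
  have hk' : k ≤ m := Nat.lt_succ_iff.mp (Finset.mem_range.mp hk)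
  rw [Nat.add_sub_cancel' hk']
  simp [Nat.succ_sub_one]

theorem stmt10 (lam ν t : ℝ) (k : ℕ) (hk : 1 ≤ k) (hlam : 0 < lam)
    (hν : ν ∈ Set.Ioc (0 : ℝ) 1) (ht : 0 < t) :
    pfrac lam ν k t =
      lam * ∫ w in (0 : ℝ)..t,
        (t - w) ^ (ν - 1) * ML2 ν ν (-(lam * (t - w) ^ ν)) * pfrac lam ν (k - 1) w := by
  obtain ⟨hν0, hν1⟩ := hν
  obtain ⟨K, rfl⟩ : ∃ K, k = K + 1 := ⟨k - 1, (Nat.succ_pred_eq_of_pos hk).symm⟩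
  simp only [Nat.add_sub_cancel]
  -- basic positivity facts
  have hΓpos : ∀ y : ℝ, 0 < y → 0 < Real.Gamma y := fun y hy => Real.Gamma_pos_of_pos hy
  have hKγ : (0:ℝ) < ν * K + 1 := by positivity
  -- Step A: pointwise expansion of the integrand into a double series
  have hpointwise : ∀ w ∈ Set.Ioo (0:ℝ) t,
      (t - w) ^ (ν - 1) * ML2 ν ν (-(lam * (t - w) ^ ν)) * pfrac lam ν K w =
        ∑' p : ℕ × ℕ, auxF lam ν t K p w := by
    intro w hw
    obtain ⟨hw0, hwt⟩ := hw
    have htw : 0 < t - w := by linarith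
    set f : ℕ → ℝ := fun r => (-lam) ^ r * (t - w) ^ (ν * r + ν - 1) / Real.Gamma (ν * r + ν)
      with hf
    set g : ℕ → ℝ := fun s => lam ^ K * poch ((K:ℝ) + 1) s * (-lam) ^ s *
        w ^ (ν * s + ν * K) / ((s.factorial : ℝ) * Real.Gamma (ν * s + (ν * K + 1)))
      with hg
    have hexp : ∀ (u : ℝ), 0 < u → ∀ (e : ℝ) (r : ℕ),
        u ^ e * ((-(lam * u ^ ν)) ^ r) = (-lam) ^ r * u ^ (ν * r + e) := by
      intro u hu e r
      rw [show -(lam * u ^ ν) = (-lam) * u ^ ν by ring, mul_pow,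
        rpow_nat_mul hu.le ν r, show ν * (r:ℝ) + e = e + ν * r by ring,
        Real.rpow_add hu]
      ring
    have h1 : (t - w) ^ (ν - 1) * ML2 ν ν (-(lam * (t - w) ^ ν)) = ∑' r, f r := by
      rw [ML2, ← tsum_mul_left]
      apply tsum_congr
      intro r
      rw [hf]
      have := hexp (t - w) htw (ν - 1) r
      simp only
      rw [mul_div_assoc' ((t-w)^(ν-1)) _ _, this]
      congr 2
      ring
    have h2 : pfrac lam ν K w = ∑' s, g s := by
      rw [pfrac, ML3, ← tsum_mul_left]
      apply tsum_congr
      intro s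
      rw [hg]
      simp only
      have hlw : (lam * w ^ ν) ^ K = lam ^ K * w ^ (ν * K) := by
        rw [mul_pow, rpow_nat_mul hw0.le ν K]
      have hzs : (-(lam * w ^ ν)) ^ s = (-lam) ^ s * w ^ (ν * s) := by
        rw [show -(lam * w ^ ν) = (-lam) * w ^ ν by ring, mul_pow, rpow_nat_mul hw0.le ν s]
      have hww : w ^ (ν * s + ν * K) = w ^ (ν * (s:ℝ)) * w ^ (ν * (K:ℝ)) :=
        Real.rpow_add hw0 _ _
      rw [hlw, hzs, hww]
      ring
    have hfs : Summable fun r => ‖f r‖ := by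
      have hbase := ((summable_ml2 hν0 hν1 hν0 (lam * (t - w) ^ ν)).mul_left
        ((t - w) ^ (ν - 1)))
      apply hbase.congr
      intro r
      have hΓ : 0 < Real.Gamma (ν * r + ν) := hΓpos _ (by positivity)
      have hz : (lam * (t - w) ^ ν) ^ r = lam ^ r * (t - w) ^ (ν * (r:ℝ)) := by
        rw [mul_pow, rpow_nat_mul htw.le]
      rw [hf]
      simp only
      rw [Real.norm_eq_abs, abs_div, abs_mul, abs_pow, abs_neg, abs_of_pos hlam,
        abs_of_nonneg (Real.rpow_nonneg htw.le _), abs_of_pos hΓ, hz,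
        show ν * (r:ℝ) + ν - 1 = ν * (r:ℝ) + (ν - 1) by ring, Real.rpow_add htw]
      ring
    have hgs : Summable fun s => ‖g s‖ := by
      have hbase := ((summable_ml hν0 hν1 hKγ
        (by positivity : (0:ℝ) ≤ (K:ℝ) + 1) (lam * w ^ ν)).mul_left
        (lam ^ K * w ^ (ν * (K:ℝ))))
      apply hbase.congr
      intro s
      have hΓ : 0 < Real.Gamma (ν * s + (ν * K + 1)) := hΓpos _ (by positivity)
      have hfa : (0:ℝ) < s.factorial := by exact_mod_cast s.factorial_pos
      have hz : (lam * w ^ ν) ^ s = lam ^ s * w ^ (ν * (s:ℝ)) := by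
        rw [mul_pow, rpow_nat_mul hw0.le]
      rw [hg]
      simp only
      rw [Real.norm_eq_abs, abs_div, abs_mul, abs_mul, abs_mul, abs_pow lam,
        abs_of_pos hlam, abs_of_nonneg (poch_nonneg (by positivity : (0:ℝ) ≤ (K:ℝ) + 1) s),
        abs_pow (-lam), abs_neg, abs_of_pos hlam,
        abs_of_nonneg (Real.rpow_nonneg hw0.le _), abs_of_pos (by positivity), hz,
        Real.rpow_add hw0]
      ring
    rw [h1, h2, tsum_mul_tsum_of_summable_norm hfs hgs]
    apply tsum_congr
    intro p
    rw [hf, hg]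
    simp only
    rw [auxF, auxA]
    ring
  -- positivity of the various Gamma values
  have he1 : ∀ p : ℕ × ℕ, (0:ℝ) < ν * p.1 + ν := fun p => by positivity
  have he2 : ∀ p : ℕ × ℕ, (0:ℝ) < ν * p.2 + ν * K + 1 := fun p => by positivity
  -- Step B: integrability
  have hFinteg : ∀ p : ℕ × ℕ, IntegrableOn (auxF lam ν t K p) (Set.Ioo 0 t) := by
    intro p
    have hb := beta_integrable (e1 := ν * p.1 + ν - 1) (e2 := ν * p.2 + ν * K)
      (by have := he1 p; linarith) (by positivity) ht
    exact hb.const_mul (auxA lam ν K p)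
  -- the Beta integral values
  set Jv : ℕ × ℕ → ℝ := fun p =>
    Real.Gamma (ν * p.1 + ν) * Real.Gamma (ν * p.2 + ν * K + 1) /
      Real.Gamma ((ν * p.1 + ν) + (ν * p.2 + ν * K + 1)) *
      t ^ ((ν * p.1 + ν) + (ν * p.2 + ν * K + 1) - 1) with hJv
  have hJ : ∀ p : ℕ × ℕ, ∫ w in Set.Ioo (0:ℝ) t,
      (t - w) ^ (ν * p.1 + ν - 1) * w ^ (ν * p.2 + ν * K) = Jv p := by
    intro p
    rw [← MeasureTheory.integral_Ioc_eq_integral_Ioo,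
      ← intervalIntegral.integral_of_le ht.le]
    have hbv := beta_value (a := ν * p.1 + ν) (b := ν * p.2 + ν * K + 1)
      (he1 p) (he2 p) ht
    simp only [show ν * (p.2:ℝ) + ν * K + 1 - 1 = ν * p.2 + ν * K by ring] at hbv
    simp only [hJv]
    rw [← hbv]
    apply intervalIntegral.integral_congr
    intro x _
    simp only
    ring
  have hJnn : ∀ p : ℕ × ℕ, 0 ≤ Jv p := by
    intro p
    have h1 := hΓpos _ (he1 p)
    have h2 := hΓpos _ (he2 p)
    have h3 := hΓpos ((ν * p.1 + ν) + (ν * p.2 + ν * K + 1)) (by positivity)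
    simp only [hJv]
    positivity
  -- Step C: value of each integral
  have hAT : ∀ p : ℕ × ℕ, auxA lam ν K p * Jv p = auxT lam ν t K p := by
    intro p
    have h1 := hΓpos _ (he1 p)
    have h2 := hΓpos _ (he2 p)
    have h3 := hΓpos ((ν * p.1 + ν) + (ν * p.2 + ν * K + 1)) (by positivity)
    have hfa : (0:ℝ) < p.2.factorial := by exact_mod_cast p.2.factorial_pos
    simp only [hJv]
    rw [auxA, auxT, auxU, auxV]
    have hΓeq : Real.Gamma (ν * ((p.1 + p.2 : ℕ):ℝ) + (ν * K + ν + 1)) =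
        Real.Gamma ((ν * p.1 + ν) + (ν * p.2 + ν * K + 1)) := by
      congr 1; push_cast; ring
    have htpow : t ^ ((ν * (p.1:ℝ) + ν) + (ν * p.2 + ν * K + 1) - 1) =
        t ^ (ν * ((p.1 + p.2 : ℕ):ℝ)) * t ^ (ν * (K:ℝ) + ν) := by
      rw [← Real.rpow_add ht]
      congr 1; push_cast; ring
    have hzpow : (-(lam * t ^ ν)) ^ (p.1 + p.2) =
        (-lam) ^ p.1 * (-lam) ^ p.2 * t ^ (ν * ((p.1 + p.2 : ℕ):ℝ)) := by
      rw [show -(lam * t ^ ν) = (-lam) * t ^ ν by ring, mul_pow,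
        rpow_nat_mul ht.le ν (p.1 + p.2), pow_add]
    rw [hΓeq, htpow, hzpow]
    field_simp
    ring
  have hval : ∀ p : ℕ × ℕ, ∫ w in Set.Ioo (0:ℝ) t, auxF lam ν t K p w =
      auxT lam ν t K p := by
    intro p
    have : ∫ w in Set.Ioo (0:ℝ) t, auxF lam ν t K p w =
        auxA lam ν K p * ∫ w in Set.Ioo (0:ℝ) t,
          (t - w) ^ (ν * p.1 + ν - 1) * w ^ (ν * p.2 + ν * K) := by
      rw [← MeasureTheory.integral_const_mul]
      rfl
    rw [this, hJ p, hAT p]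
  -- norm integrals
  have hnormint : ∀ p : ℕ × ℕ, ∫ w in Set.Ioo (0:ℝ) t, ‖auxF lam ν t K p w‖ =
      |auxA lam ν K p| * Jv p := by
    intro p
    have hcong : ∀ w ∈ Set.Ioo (0:ℝ) t, ‖auxF lam ν t K p w‖ =
        |auxA lam ν K p| * ((t - w) ^ (ν * p.1 + ν - 1) * w ^ (ν * p.2 + ν * K)) := by
      intro w hw
      have h1 : (0:ℝ) ≤ (t - w) ^ (ν * (p.1:ℝ) + ν - 1) :=
        Real.rpow_nonneg (by linarith [hw.2]) _
      have h2 : (0:ℝ) ≤ w ^ (ν * (p.2:ℝ) + ν * K) := Real.rpow_nonneg hw.1.le _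
      rw [auxF, Real.norm_eq_abs, abs_mul, abs_mul, abs_of_nonneg h1, abs_of_nonneg h2]
    rw [MeasureTheory.setIntegral_congr_fun measurableSet_Ioo hcong,
      MeasureTheory.integral_const_mul, hJ p]
  have habsT : ∀ p : ℕ × ℕ, |auxA lam ν K p| * Jv p = |auxT lam ν t K p| := by
    intro p
    rw [← hAT p, abs_mul, abs_of_nonneg (hJnn p)]
  -- summability of the absolute values
  have habsT2 : ∀ p : ℕ × ℕ, |auxT lam ν t K p| =
      auxU' lam ν t K (p.1 + p.2) * auxV K p.2 := by
    intro p
    have hΓ : 0 < Real.Gamma (ν * ((p.1 + p.2 : ℕ):ℝ) + (ν * K + ν + 1)) :=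
      hΓpos _ (by positivity)
    have hfa : (0:ℝ) < p.2.factorial := by exact_mod_cast p.2.factorial_pos
    have htν : (0:ℝ) < lam * t ^ ν := by positivity
    rw [auxT, auxU, auxU', auxV, abs_mul, abs_div, abs_div, abs_mul, abs_mul,
      abs_pow lam, abs_of_pos hlam, abs_of_nonneg (Real.rpow_nonneg ht.le _),
      abs_pow (-(lam * t ^ ν)), abs_neg, abs_of_pos htν, abs_of_pos hΓ,
      abs_of_nonneg (poch_nonneg (by positivity : (0:ℝ) ≤ (K:ℝ) + 1) p.2),
      abs_of_pos hfa]
  have hUVnn : ∀ x : (Σ n : ℕ, Finset.HasAntidiagonal.antidiagonal n),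
      (0:ℝ) ≤ auxU' lam ν t K ((x.2 : ℕ × ℕ).1 + (x.2 : ℕ × ℕ).2) * auxV K (x.2 : ℕ × ℕ).2 := by
    intro x
    have hΓ : 0 < Real.Gamma (ν * (((x.2:ℕ×ℕ).1 + (x.2:ℕ×ℕ).2 : ℕ):ℝ) + (ν * K + ν + 1)) :=
      hΓpos _ (by positivity)
    have hfa : (0:ℝ) < ((x.2:ℕ×ℕ).2).factorial := by exact_mod_cast Nat.factorial_pos _
    have hpoch := poch_nonneg (by positivity : (0:ℝ) ≤ (K:ℝ) + 1) (x.2:ℕ×ℕ).2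
    rw [auxU', auxV]
    positivity
  have hantisum : ∀ (m : ℕ) (u : ℕ → ℝ),
      ∑ kl ∈ Finset.HasAntidiagonal.antidiagonal m, u (kl.1 + kl.2) * auxV K kl.2 =
        u m * (poch ((K:ℝ) + 2) m / m.factorial) := by
    intro m u
    rw [antidiagonal_sum_eq u (auxV K) m]
    congr 1
    have := poch_sum ((K:ℝ) + 1) m
    rw [show (K:ℝ) + 1 + 1 = (K:ℝ) + 2 by ring] at this
    rw [← this]
    rfl
  have hsumU' : Summable fun m : ℕ =>
      auxU' lam ν t K m * (poch ((K:ℝ) + 2) m / m.factorial) := by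
    have hbase := (summable_ml hν0 hν1 (by positivity : (0:ℝ) < ν * K + ν + 1)
      (by positivity : (0:ℝ) ≤ (K:ℝ) + 2) (lam * t ^ ν)).mul_left
      (lam ^ K * t ^ (ν * (K:ℝ) + ν))
    apply hbase.congr
    intro m
    rw [auxU']
    ring
  have hsumUV : Summable fun p : ℕ × ℕ => auxU' lam ν t K (p.1 + p.2) * auxV K p.2 := by
    rw [← Finset.HasAntidiagonal.sigmaAntidiagonalEquivProd.summable_iff]
    have : (fun p : ℕ × ℕ => auxU' lam ν t K (p.1 + p.2) * auxV K p.2) ∘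
        (Finset.HasAntidiagonal.sigmaAntidiagonalEquivProd (A := ℕ)) =
        fun x : (Σ n : ℕ, Finset.HasAntidiagonal.antidiagonal n) =>
          auxU' lam ν t K ((x.2 : ℕ × ℕ).1 + (x.2 : ℕ × ℕ).2) * auxV K (x.2 : ℕ × ℕ).2 := by
      funext x
      rfl
    rw [this]
    apply (summable_sigma_of_nonneg hUVnn).2
    constructor
    · intro n
      exact (hasSum_fintype _).summable
    · apply Summable.congr hsumU'
      intro m
      rw [Finset.tsum_subtype (Finset.HasAntidiagonal.antidiagonal m)
        (fun kl => auxU' lam ν t K (kl.1 + kl.2) * auxV K kl.2),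
        hantisum m (auxU' lam ν t K)]
  have hsumabs : Summable fun p : ℕ × ℕ => |auxT lam ν t K p| := by
    apply hsumUV.congr
    intro p
    rw [habsT2 p]
  have hsumT : Summable (auxT lam ν t K) :=
    Summable.of_norm (by simpa [Real.norm_eq_abs] using hsumabs)
  have hFsumnorm : Summable fun p : ℕ × ℕ =>
      ∫ w in Set.Ioo (0:ℝ) t, ‖auxF lam ν t K p w‖ := by
    apply hsumabs.congr
    intro p
    rw [← habsT p, ← hnormint p]
  -- Step D: resummation
  have hsig : Summable fun x : (Σ n : ℕ, Finset.HasAntidiagonal.antidiagonal n) =>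
      auxT lam ν t K (Finset.HasAntidiagonal.sigmaAntidiagonalEquivProd x) := by
    have h := (Finset.HasAntidiagonal.sigmaAntidiagonalEquivProd (A := ℕ)).summable_iff.2 hsumT
    exact h
  have hresum : ∑' p : ℕ × ℕ, auxT lam ν t K p =
      ∑' m : ℕ, auxU lam ν t K m * (poch ((K:ℝ) + 2) m / m.factorial) := by
    have e1 : ∑' x : (Σ n : ℕ, Finset.HasAntidiagonal.antidiagonal n),
        auxT lam ν t K (Finset.HasAntidiagonal.sigmaAntidiagonalEquivProd x) =
        ∑' p : ℕ × ℕ, auxT lam ν t K p :=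
      Finset.HasAntidiagonal.sigmaAntidiagonalEquivProd.tsum_eq _
    have e2 := Summable.tsum_sigma'
      (f := fun x : (Σ n : ℕ, Finset.HasAntidiagonal.antidiagonal n) =>
        auxT lam ν t K (Finset.HasAntidiagonal.sigmaAntidiagonalEquivProd x))
      (fun n => (hasSum_fintype _).summable) hsig
    rw [← e1, e2]
    apply tsum_congr
    intro m
    have e3 : ∀ c : (Finset.HasAntidiagonal.antidiagonal m : Finset (ℕ × ℕ)),
        auxT lam ν t K (Finset.HasAntidiagonal.sigmaAntidiagonalEquivProd ⟨m, c⟩) = auxT lam ν t K (c : ℕ × ℕ) :=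
      fun c => rfl
    rw [tsum_congr e3, Finset.tsum_subtype (Finset.HasAntidiagonal.antidiagonal m)
      (fun kl => auxT lam ν t K kl)]
    rw [show (∑ kl ∈ Finset.HasAntidiagonal.antidiagonal m, auxT lam ν t K kl) =
      ∑ kl ∈ Finset.HasAntidiagonal.antidiagonal m, auxU lam ν t K (kl.1 + kl.2) * auxV K kl.2 from rfl]
    rw [hantisum m (auxU lam ν t K)]
  -- Final assembly
  have hfinal : pfrac lam ν (K + 1) t =
      lam * ∑' m : ℕ, auxU lam ν t K m * (poch ((K:ℝ) + 2) m / m.factorial) := by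
    rw [pfrac, ML3, ← tsum_mul_left, ← tsum_mul_left]
    apply tsum_congr
    intro m
    rw [auxU]
    have hΓeq : Real.Gamma (ν * (m:ℝ) + (ν * ((K + 1 : ℕ):ℝ) + 1)) =
        Real.Gamma (ν * (m:ℝ) + (ν * (K:ℝ) + ν + 1)) := by
      congr 1; push_cast; ring
    have hpoch : ((K + 1 : ℕ):ℝ) + 1 = (K:ℝ) + 2 := by push_cast; ring
    have hpw : (lam * t ^ ν) ^ (K + 1) = lam * (lam ^ K * t ^ (ν * (K:ℝ) + ν)) := by
      rw [mul_pow, rpow_nat_mul ht.le ν (K + 1), pow_succ,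
        show ν * ((K + 1 : ℕ):ℝ) = ν * (K:ℝ) + ν by push_cast; ring]
      ring
    rw [hΓeq, hpoch, hpw]
    ring
  calc pfrac lam ν (K + 1) t
      = lam * ∑' m : ℕ, auxU lam ν t K m * (poch ((K:ℝ) + 2) m / m.factorial) := hfinal
    _ = lam * ∑' p : ℕ × ℕ, auxT lam ν t K p := by rw [hresum]
    _ = lam * ∑' p : ℕ × ℕ, ∫ w in Set.Ioo (0:ℝ) t, auxF lam ν t K p w := by
        congr 1; exact tsum_congr fun p => (hval p).symm
    _ = lam * ∫ w in Set.Ioo (0:ℝ) t, ∑' p : ℕ × ℕ, auxF lam ν t K p w := by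
        rw [MeasureTheory.integral_tsum_of_summable_integral_norm hFinteg hFsumnorm]
    _ = lam * ∫ w in Set.Ioo (0:ℝ) t,
          (t - w) ^ (ν - 1) * ML2 ν ν (-(lam * (t - w) ^ ν)) * pfrac lam ν K w := by
        congr 1
        exact (MeasureTheory.setIntegral_congr_fun measurableSet_Ioo hpointwise).symm
    _ = lam * ∫ w in (0:ℝ)..t,
          (t - w) ^ (ν - 1) * ML2 ν ν (-(lam * (t - w) ^ ν)) * pfrac lam ν K w := by
        rw [intervalIntegral.integral_of_le ht.le,
          MeasureTheory.integral_Ioc_eq_integral_Ioo]
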